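/- For 1 < p < 2 there exists a constant c_p > 0 such that for all vectors x, y in ℝⁿ, ⟨|x|^{p-2}x − |y|^{p-2}y, x − y⟩ ≥ c_p |x − y|² (|x| + |y|)^{p-2}, where the right-hand side is interpreted as 0 when x = y = 0. -/

import Mathlib

open MeasureTheory Real RealInnerProductSpace

-- tangent-line inequality for concave t^q, 0<q<1: y^q ≤ x^q + q x^{q-1}(y-x)
lemma bern {q x y : ℝ} (hq0 : 0 < q) (hq1 : q < 1) (hx : 0 < x) (hy : 0 ≤ y) :
    y ^ q ≤ x ^ q + q * x ^ (q - 1) * (y - x) := by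
  have hs : (-1 : ℝ) ≤ (y - x) / x := by
    rw [le_div_iff₀ hx]; linarith
  have h := rpow_one_add_le_one_add_mul_self hs hq0.le hq1.le
  have h1 : 1 + (y - x) / x = y / x := by field_simp; ring
  rw [h1, Real.div_rpow hy hx.le] at h
  have hxq : (0:ℝ) < x ^ q := Real.rpow_pos_of_pos hx q
  have h2 : y ^ q ≤ x ^ q * (1 + q * ((y - x) / x)) := by
    rw [mul_comm, ← div_le_iff₀ hxq]; exact h
  calc y ^ q ≤ x ^ q * (1 + q * ((y - x) / x)) := h2
    _ = x ^ q + q * (x ^ q / x) * (y - x) := by field_simp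
    _ = x ^ q + q * x ^ (q - 1) * (y - x) := by
        rw [← Real.rpow_sub_one hx.ne' q]

lemma rpow_shift {x p : ℝ} (hx : 0 ≤ x) (h1 : p - 1 ≠ 0) (h2 : p - 2 ≠ 0) :
    x ^ (p - 1) = x ^ (p - 2) * x := by
  rcases eq_or_lt_of_le hx with rfl | hx'
  · rw [Real.zero_rpow h1, Real.zero_rpow h2, mul_zero]
  · rw [← Real.rpow_add_one hx'.ne' (p - 2)]; ring_nf

-- 1-D monotonicity: a^q - b^q ≥ q (a-b) (a+b)^{q-1}
lemma end1 {q a b : ℝ} (hq0 : 0 < q) (hq1 : q < 1) (hb : 0 ≤ b) (hba : b ≤ a) :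
    q * (a - b) * (a + b) ^ (q - 1) ≤ a ^ q - b ^ q := by
  rcases eq_or_lt_of_le (hb.trans hba) with rfl | ha
  · have hb0 : b = 0 := le_antisymm hba hb
    subst hb0
    simp [Real.zero_rpow hq0.ne', Real.zero_rpow (by linarith : q - 1 ≠ 0)]
  · have h := bern hq0 hq1 ha hb
    have h2 : (a + b) ^ (q - 1) ≤ a ^ (q - 1) :=
      Real.rpow_le_rpow_of_nonpos ha (by linarith) (by linarith)
    have h3 : q * (a - b) * (a + b) ^ (q - 1) ≤ q * (a - b) * a ^ (q - 1) :=
      mul_le_mul_of_nonneg_left h2 (mul_nonneg hq0.le (by linarith))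
    nlinarith [h3, h]

-- subadditivity (with b ≤ a): (a+b)^q ≤ a^q + b^q
lemma end2 {q a b : ℝ} (hq0 : 0 < q) (hq1 : q < 1) (hb : 0 ≤ b) (hba : b ≤ a) :
    (a + b) ^ q ≤ a ^ q + b ^ q := by
  rcases eq_or_lt_of_le hb with rfl | hb'
  · simp [Real.zero_rpow hq0.ne']
  · have ha : 0 < a := lt_of_lt_of_le hb' hba
    have h := bern hq0 hq1 ha (by linarith : (0:ℝ) ≤ a + b)
    have h2 : a ^ (q - 1) ≤ b ^ (q - 1) :=
      Real.rpow_le_rpow_of_nonpos hb' hba (by linarith)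
    have h3 : q * a ^ (q - 1) * b ≤ b ^ (q - 1) * b := by
      have : q * a ^ (q - 1) ≤ b ^ (q - 1) := by
        calc q * a ^ (q - 1) ≤ 1 * a ^ (q - 1) := by
              apply mul_le_mul_of_nonneg_right hq1.le (Real.rpow_nonneg ha.le _)
          _ = a ^ (q - 1) := one_mul _
          _ ≤ b ^ (q - 1) := h2
      exact mul_le_mul_of_nonneg_right this hb
    have h4 : b ^ (q - 1) * b = b ^ q := by
      rw [← Real.rpow_add_one hb'.ne']; ring_nf
    nlinarith [h, h3]

lemma key_half {p a b s : ℝ} (hp1 : 1 < p) (hp2 : p < 2) (hb : 0 ≤ b) (hba : b ≤ a)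
    (hs : |s| ≤ a * b) :
    (p - 1) * (a ^ 2 + b ^ 2 - 2 * s) * (a + b) ^ (p - 2) ≤
      a ^ (p - 2) * a ^ 2 + b ^ (p - 2) * b ^ 2 - (a ^ (p - 2) + b ^ (p - 2)) * s := by
  have ha : 0 ≤ a := hb.trans hba
  have h1 : p - 1 ≠ 0 := by intro h; linarith [h]
  have h2 : p - 2 ≠ 0 := by intro h; linarith [h]
  rcases eq_or_lt_of_le ha with rfl | ha'
  · have hb0 : b = 0 := le_antisymm hba hb
    have hs0 : s = 0 := by
      have := abs_nonneg s
      have : |s| = 0 := le_antisymm (by simpa [hb0] using hs) (abs_nonneg s)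
      exact abs_eq_zero.mp this
    subst hb0; subst hs0
    simp [Real.zero_rpow h2]
  · -- a > 0
    have hq0 : (0:ℝ) < p - 1 := by linarith
    have hq1 : p - 1 < 1 := by linarith
    have hqm : p - 1 - 1 = p - 2 := by ring
    have hab : 0 < a + b := by linarith
    have hA : a ^ (p - 1) = a ^ (p - 2) * a := rpow_shift ha h1 h2
    have hB : b ^ (p - 1) = b ^ (p - 2) * b := rpow_shift hb h1 h2
    have hC : (a + b) ^ (p - 1) = (a + b) ^ (p - 2) * (a + b) := rpow_shift hab.le h1 h2
    -- endpoint 1: s = a*b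
    have E1 : (p - 1) * (a - b) ^ 2 * (a + b) ^ (p - 2) ≤
        a ^ (p - 2) * a ^ 2 + b ^ (p - 2) * b ^ 2 - (a ^ (p - 2) + b ^ (p - 2)) * (a * b) := by
      have h0 := end1 hq0 hq1 hb hba
      rw [hqm] at h0
      have h3 := mul_le_mul_of_nonneg_right h0 (by linarith : (0:ℝ) ≤ a - b)
      have expand : (a ^ (p - 1) - b ^ (p - 1)) * (a - b) =
          a ^ (p - 2) * a ^ 2 + b ^ (p - 2) * b ^ 2 - (a ^ (p - 2) + b ^ (p - 2)) * (a * b) := by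
        rw [hA, hB]; ring
      rw [expand] at h3
      calc (p - 1) * (a - b) ^ 2 * (a + b) ^ (p - 2)
          = (p - 1) * (a - b) * (a + b) ^ (p - 2) * (a - b) := by ring
        _ ≤ _ := h3
    -- endpoint 2: s = -(a*b)
    have E2 : (p - 1) * (a + b) ^ 2 * (a + b) ^ (p - 2) ≤
        a ^ (p - 2) * a ^ 2 + b ^ (p - 2) * b ^ 2 + (a ^ (p - 2) + b ^ (p - 2)) * (a * b) := by
      have hsub := end2 hq0 hq1 hb hba
      have h3 : (p - 1) * (a + b) ^ (p - 1) ≤ a ^ (p - 1) + b ^ (p - 1) := by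
        calc (p - 1) * (a + b) ^ (p - 1) ≤ 1 * (a + b) ^ (p - 1) := by
              apply mul_le_mul_of_nonneg_right (by linarith) (Real.rpow_nonneg hab.le _)
          _ = (a + b) ^ (p - 1) := one_mul _
          _ ≤ a ^ (p - 1) + b ^ (p - 1) := hsub
      have h4 := mul_le_mul_of_nonneg_right h3 hab.le
      have expL : (a ^ (p - 1) + b ^ (p - 1)) * (a + b) =
          a ^ (p - 2) * a ^ 2 + b ^ (p - 2) * b ^ 2 + (a ^ (p - 2) + b ^ (p - 2)) * (a * b) := by
        rw [hA, hB]; ring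
      have expR : (p - 1) * (a + b) ^ (p - 1) * (a + b) =
          (p - 1) * (a + b) ^ 2 * (a + b) ^ (p - 2) := by
        rw [hC]; ring
      rw [← expL, ← expR]; exact h4
    -- combine: affine in s
    have hs1 : s ≤ a * b := (abs_le.mp hs).2
    have hs2 : -(a * b) ≤ s := (abs_le.mp hs).1
    rcases le_or_gt 0 ((a ^ (p - 2) + b ^ (p - 2)) - 2 * (p - 1) * (a + b) ^ (p - 2)) with hBp | hBn
    · nlinarith [mul_nonneg hBp (by linarith : (0:ℝ) ≤ a * b - s), E1]
    · nlinarith [mul_nonneg (by linarith : (0:ℝ) ≤ 2 * (p - 1) * (a + b) ^ (p - 2) - (a ^ (p - 2) + b ^ (p - 2))) (by linarith : (0:ℝ) ≤ s + a * b), E2]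

lemma key {p a b s : ℝ} (hp1 : 1 < p) (hp2 : p < 2) (ha : 0 ≤ a) (hb : 0 ≤ b)
    (hs : |s| ≤ a * b) :
    (p - 1) * (a ^ 2 + b ^ 2 - 2 * s) * (a + b) ^ (p - 2) ≤
      a ^ (p - 2) * a ^ 2 + b ^ (p - 2) * b ^ 2 - (a ^ (p - 2) + b ^ (p - 2)) * s := by
  rcases le_total b a with h | h
  · exact key_half hp1 hp2 hb h hs
  · have := key_half hp1 hp2 ha h (by rwa [mul_comm])
    rw [add_comm b a] at this
    linarith

theorem stmt_1 (p : ℝ) (hp1 : 1 < p) (hp2 : p < 2) (n : ℕ) :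
    ∃ c : ℝ, 0 < c ∧ ∀ x y : EuclideanSpace ℝ (Fin n),
      ⟪(‖x‖ ^ (p - 2)) • x - (‖y‖ ^ (p - 2)) • y, x - y⟫ ≥
        c * ‖x - y‖ ^ (2 : ℝ) * (‖x‖ + ‖y‖) ^ (p - 2) := by
  refine ⟨p - 1, by linarith, fun x y => ?_⟩
  have hs : |⟪x, y⟫| ≤ ‖x‖ * ‖y‖ := abs_real_inner_le_norm x y
  have hkey := key hp1 hp2 (norm_nonneg x) (norm_nonneg y) hs
  have hL : ⟪(‖x‖ ^ (p - 2)) • x - (‖y‖ ^ (p - 2)) • y, x - y⟫ =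
      ‖x‖ ^ (p - 2) * ‖x‖ ^ 2 + ‖y‖ ^ (p - 2) * ‖y‖ ^ 2 -
        (‖x‖ ^ (p - 2) + ‖y‖ ^ (p - 2)) * ⟪x, y⟫ := by
    rw [inner_sub_left, inner_sub_right, inner_sub_right, real_inner_smul_left,
      real_inner_smul_left, real_inner_smul_left, real_inner_smul_left,
      real_inner_self_eq_norm_sq, real_inner_self_eq_norm_sq, real_inner_comm y x]
    ring
  have hN : ‖x - y‖ ^ (2 : ℝ) = ‖x‖ ^ 2 + ‖y‖ ^ 2 - 2 * ⟪x, y⟫ := by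
    rw [show ((2:ℝ)) = ((2:ℕ):ℝ) by norm_num, Real.rpow_natCast, norm_sub_sq_real]
    ring
  rw [ge_iff_le, hL, hN]
  exact hkey
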